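/- For every natural number r ≥ 1 and every positive integer n, Λ_r(n) ≥ 0, i.e., the generalized von Mangoldt function is nonnegative. -/

import Mathlib

open ArithmeticFunction Finset
open scoped ArithmeticFunction.Moebius ArithmeticFunction.zeta

/-- `(log n)^r` as an arithmetic function. -/
noncomputable def logpow (r : ℕ) : ArithmeticFunction ℝ :=
  ⟨fun n => if n = 0 then 0 else (Real.log n) ^ r, by simp⟩

lemma logpow_apply {r n : ℕ} :
    logpow r n = if n = 0 then 0 else (Real.log n) ^ r := rfl

lemma leibniz (f g : ArithmeticFunction ℝ) :
    (f * g).pmul ArithmeticFunction.log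
      = (f.pmul ArithmeticFunction.log) * g + f * (g.pmul ArithmeticFunction.log) := by
  ext n
  rcases eq_or_ne n 0 with rfl | hn
  · simp
  simp only [pmul_apply, mul_apply, ArithmeticFunction.add_apply, log_apply, Finset.sum_mul, ← Finset.sum_add_distrib]
  refine Finset.sum_congr rfl fun p hp => ?_
  obtain ⟨hmul, -⟩ := Nat.mem_divisorsAntidiagonal.mp hp
  have h1 : p.1 ≠ 0 := by rintro h; simp [h] at hmul; exact hn hmul.symm
  have h2 : p.2 ≠ 0 := by rintro h; simp [h] at hmul; exact hn hmul.symm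
  rw [← hmul, Nat.cast_mul, Real.log_mul (by exact_mod_cast h1) (by exact_mod_cast h2)]
  ring

lemma logpow_succ (r : ℕ) :
    logpow (r + 1) = (logpow r).pmul ArithmeticFunction.log := by
  ext n
  rcases eq_or_ne n 0 with rfl | hn
  · simp [logpow_apply]
  · simp [logpow_apply, hn, pow_succ, log_apply]

lemma zeta_pmul_log : (ζ : ArithmeticFunction ℝ).pmul ArithmeticFunction.log
    = ArithmeticFunction.log := by
  ext n
  rcases eq_or_ne n 0 with rfl | hn
  · simp
  · simp [pmul_apply, natCoe_apply, hn]

/-- The generalized von Mangoldt function as an arithmetic function. -/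
noncomputable def Lam (r : ℕ) : ArithmeticFunction ℝ := (μ : ArithmeticFunction ℝ) * logpow r

lemma Lam_succ (r : ℕ) :
    Lam (r + 1) = (Lam r).pmul ArithmeticFunction.log + Lam r * Λ := by
  have h1 : Lam r * ζ = logpow r := by
    rw [Lam, mul_comm ((μ : ArithmeticFunction ℝ)), mul_assoc, coe_moebius_mul_coe_zeta, mul_one]
  have h2 : (μ : ArithmeticFunction ℝ) * ((Lam r).pmul ArithmeticFunction.log * ζ)
      = (Lam r).pmul ArithmeticFunction.log := by
    rw [mul_comm ((Lam r).pmul ArithmeticFunction.log), ← mul_assoc, coe_moebius_mul_coe_zeta,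
      one_mul]
  calc Lam (r + 1) = (μ : ArithmeticFunction ℝ) * (Lam r * ζ).pmul ArithmeticFunction.log := by
        rw [Lam, logpow_succ, h1]
    _ = (μ : ArithmeticFunction ℝ) * ((Lam r).pmul ArithmeticFunction.log * ζ
          + Lam r * ((ζ : ArithmeticFunction ℝ).pmul ArithmeticFunction.log)) := by
        rw [leibniz]
    _ = _ := by
        rw [mul_add, h2, zeta_pmul_log, ← mul_assoc, mul_comm ((μ : ArithmeticFunction ℝ)),
          mul_assoc, moebius_mul_log_eq_vonMangoldt]

lemma Lam_one : Lam 1 = Λ := by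
  have : logpow 1 = ArithmeticFunction.log := by
    ext n
    rcases eq_or_ne n 0 with rfl | hn
    · simp [logpow_apply]
    · simp [logpow_apply, hn, log_apply]
  rw [Lam, this, moebius_mul_log_eq_vonMangoldt]

lemma mul_nonneg' {f g : ArithmeticFunction ℝ} (hf : ∀ n, 0 ≤ f n) (hg : ∀ n, 0 ≤ g n) (n : ℕ) :
    0 ≤ (f * g) n := by
  rw [mul_apply]
  exact Finset.sum_nonneg fun p _ => mul_nonneg (hf _) (hg _)

lemma Lam_nonneg (r : ℕ) (hr : 1 ≤ r) : ∀ n, 0 ≤ Lam r n := by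
  induction r, hr using Nat.le_induction with
  | base => intro n; rw [Lam_one]; exact vonMangoldt_nonneg
  | succ r hr ih =>
    intro n
    rw [Lam_succ, ArithmeticFunction.add_apply]
    refine add_nonneg ?_ (mul_nonneg' ih (fun _ => vonMangoldt_nonneg) n)
    rw [pmul_apply, log_apply]
    exact mul_nonneg (ih n) (Real.log_natCast_nonneg n)

/-- Generalized von Mangoldt function of order `r`:
`Λ_r(n) = ∑_{d ∣ n} μ(d) (log(n/d))^r`. -/
noncomputable def genVonMangoldt (r : ℕ) (n : ℕ) : ℝ :=
  ∑ d ∈ n.divisors, (ArithmeticFunction.moebius d : ℝ) * (Real.log ((n / d : ℕ) : ℝ)) ^ r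

theorem genVonMangoldt_nonneg (r : ℕ) (hr : 1 ≤ r) (n : ℕ) (hn : 0 < n) :
    0 ≤ genVonMangoldt r n := by
  have key : genVonMangoldt r n = Lam r n := by
    rw [Lam, mul_apply, Nat.sum_divisorsAntidiagonal (fun a b =>
      ((μ : ArithmeticFunction ℝ) a) * logpow r b)]
    refine Finset.sum_congr rfl fun d hd => ?_
    have hd' : n / d ≠ 0 :=
      (Nat.div_pos (Nat.le_of_dvd hn (Nat.dvd_of_mem_divisors hd))
        (Nat.pos_of_mem_divisors hd)).ne'
    simp [genVonMangoldt, logpow_apply, hd', intCoe_apply]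
  rw [key]
  exact Lam_nonneg r hr n
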